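/- The polynomial V(x,y) = 1 + (2a₁ - a₄)x + (2a₁ + a₄)y - a₁a₄x² - a₄²xy + a₁a₄y² is an inverse integrating factor of the planar system ẋ = -y + a₁x² - a₁y² + a₄xy, ẏ = x + a₁x² - a₁y² + a₄xy; moreover V(0,0) = 1 ≠ 0. -/

import Mathlib

noncomputable def P7 (a₁ a₄ x y : ℝ) : ℝ := -y + a₁*x^2 - a₁*y^2 + a₄*x*y
noncomputable def Q7 (a₁ a₄ x y : ℝ) : ℝ := x + a₁*x^2 - a₁*y^2 + a₄*x*y
noncomputable def V7 (a₁ a₄ x y : ℝ) : ℝ :=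
  1 + (2*a₁ - a₄)*x + (2*a₁ + a₄)*y - a₁*a₄*x^2 - a₄^2*x*y + a₁*a₄*y^2

/-- V is an inverse integrating factor and V(0,0) = 1 ≠ 0. -/
theorem stmt_7 (a₁ a₄ : ℝ) :
    (∀ x y : ℝ,
      P7 a₁ a₄ x y * deriv (fun s => V7 a₁ a₄ s y) x
      + Q7 a₁ a₄ x y * deriv (fun s => V7 a₁ a₄ x s) y
      = (deriv (fun s => P7 a₁ a₄ s y) x + deriv (fun s => Q7 a₁ a₄ x s) y)
          * V7 a₁ a₄ x y)
    ∧ V7 a₁ a₄ 0 0 = 1 ∧ (1 : ℝ) ≠ 0 := by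
  refine ⟨fun x y => ?_, by norm_num [V7], one_ne_zero⟩
  have hVx : deriv (fun s => V7 a₁ a₄ s y) x
      = (2*a₁ - a₄) - 2*a₁*a₄*x - a₄^2*y := by
    have h := (((((hasDerivAt_const x (1:ℝ)).add ((hasDerivAt_id' x).const_mul (2*a₁ - a₄))).add (hasDerivAt_const x ((2*a₁ + a₄)*y))).sub ((hasDerivAt_pow 2 x).const_mul (a₁*a₄))).sub (((hasDerivAt_id' x).const_mul (a₄^2)).mul_const y)).add (hasDerivAt_const x (a₁*a₄*y^2))
    have h2 : HasDerivAt (fun s => V7 a₁ a₄ s y) ((2*a₁ - a₄) - 2*a₁*a₄*x - a₄^2*y) x := by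
      convert h using 1
      · rfl
      · rfl
      · exact funext fun s => by simp only [V7, Pi.add_apply, Pi.sub_apply]
      push_cast; ring
    exact h2.deriv
  have hVy : deriv (fun s => V7 a₁ a₄ x s) y
      = (2*a₁ + a₄) - a₄^2*x + 2*a₁*a₄*y := by
    have h := ((((hasDerivAt_const y (1 + (2*a₁ - a₄)*x)).add ((hasDerivAt_id' y).const_mul (2*a₁ + a₄))).sub (hasDerivAt_const y (a₁*a₄*x^2))).sub ((hasDerivAt_id' y).const_mul (a₄^2*x))).add ((hasDerivAt_pow 2 y).const_mul (a₁*a₄))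
    have h2 : HasDerivAt (fun s => V7 a₁ a₄ x s) ((2*a₁ + a₄) - a₄^2*x + 2*a₁*a₄*y) y := by
      convert h using 1
      · rfl
      · rfl
      · exact funext fun s => by simp only [V7, Pi.add_apply, Pi.sub_apply]
      push_cast; ring
    exact h2.deriv
  have hPx : deriv (fun s => P7 a₁ a₄ s y) x = 2*a₁*x + a₄*y := by
    have h := (((hasDerivAt_const x (-y)).add ((hasDerivAt_pow 2 x).const_mul a₁)).sub (hasDerivAt_const x (a₁*y^2))).add (((hasDerivAt_id' x).const_mul a₄).mul_const y)
    have h2 : HasDerivAt (fun s => P7 a₁ a₄ s y) (2*a₁*x + a₄*y) x := by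
      convert h using 1
      · rfl
      · rfl
      · exact funext fun s => by simp only [P7, Pi.add_apply, Pi.sub_apply]
      push_cast; ring
    exact h2.deriv
  have hQy : deriv (fun s => Q7 a₁ a₄ x s) y = -2*a₁*y + a₄*x := by
    have h := ((hasDerivAt_const y (x + a₁*x^2)).sub ((hasDerivAt_pow 2 y).const_mul a₁)).add ((hasDerivAt_id' y).const_mul (a₄*x))
    have h2 : HasDerivAt (fun s => Q7 a₁ a₄ x s) (-2*a₁*y + a₄*x) y := by
      convert h using 1
      · rfl
      · rfl
      · exact funext fun s => by simp only [Q7, Pi.add_apply, Pi.sub_apply]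
      push_cast; ring
    exact h2.deriv
  rw [hVx, hVy, hPx, hQy]
  simp only [P7, Q7, V7]
  ring
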